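/- If a linear order L is order-isomorphic to the linguage of a deterministic finite automaton over {0,1}, then so is L·ω := Σ_{n ∈ ω} L, the ω-indexed sum of copies of L (i.e. countably many copies of L arranged in the order type of the natural numbers). -/

import Mathlib

/-- A deterministic finite automaton with a partial transition function. -/
structure PDFA (σ : Type) where
  /-- the (finite) set of states -/
  State : Type
  finState : Finite State
  /-- the start state -/
  start : State
  /-- the set of accept states -/
  accept : Set State
  /-- the partial transition function -/
  step : State → σ → Option State

namespace PDFA

variable {σ : Type} (M : PDFA σ)

/-- The extended (partial) transition function `δ̂`, reading the word left to right. -/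
def run (q : M.State) (w : List σ) : Option M.State :=
  w.foldlM (fun q a => M.step q a) q

/-- The language accepted by the automaton. -/
def lang : Set (List σ) := {w | ∃ q ∈ M.accept, M.run M.start w = some q}

end PDFA

/-- The inorder relation `<₂` on finite binary words: `x <₂ y` iff, writing
`x = w·x'`, `y = w·y'` with `w` the longest common prefix, either `x'` begins
with `0`(=`false`) or `y'` begins with `1`(=`true`). -/
def inlt : List Bool → List Bool → Prop
  | [], [] => False
  | [], b :: _ => b = true
  | a :: _, [] => a = false
  | a :: x, b :: y => (a = false ∧ b = true) ∨ (a = b ∧ inlt x y)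

/-- `(L, r)` is order-isomorphic to the linguage `(L(M), <₂)` of some
deterministic finite automaton `M` over `{0,1}`. -/
def IsLinguageOf (L : Type) (r : L → L → Prop) : Prop :=
  ∃ M : PDFA Bool, Nonempty (r ≃r fun x y : M.lang => inlt x.1 y.1)

-- lift automaton
@[reducible] def liftA (M : PDFA Bool) : PDFA Bool where
  State := Option M.State
  finState := letI := M.finState; Finite.of_equiv _ (Equiv.optionEquivSumPUnit.{0,0} M.State).symm
  start := none
  accept := some '' M.accept
  step q a := match q with
    | none => if a then some none else some (some M.start)
    | some q => (M.step q a).map some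

@[simp] lemma liftA_step_some (M : PDFA Bool) (q : M.State) (a : Bool) :
    (liftA M).step (some q) a = (M.step q a).map some := rfl
@[simp] lemma liftA_step_none (M : PDFA Bool) (a : Bool) :
    (liftA M).step none a = if a then some none else some (some M.start) := rfl
@[simp] lemma liftA_start (M : PDFA Bool) : (liftA M).start = none := rfl
@[simp] lemma liftA_accept (M : PDFA Bool) : (liftA M).accept = some '' M.accept := rfl

lemma run_cons {σ} (M : PDFA σ) (q : M.State) (a : σ) (w : List σ) :
    M.run q (a :: w) = (M.step q a).bind (fun q' => M.run q' w) := by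
  simp [PDFA.run, List.foldlM]

lemma run_lift_some (M : PDFA Bool) (q : M.State) (w : List Bool) :
    (liftA M).run (some q) w = (M.run q w).map some := by
  induction w generalizing q with
  | nil => simp [PDFA.run]
  | cons a w ih =>
    rw [run_cons, run_cons]
    cases h : M.step q a <;> simp [h, ih]

def enc (n : ℕ) (v : List Bool) : List Bool := List.replicate n true ++ false :: v

lemma run_lift_enc (M : PDFA Bool) (n : ℕ) (v : List Bool) :
    (liftA M).run none (enc n v) = (M.run M.start v).map some := by
  induction n with
  | zero => rw [enc, List.replicate, List.nil_append, run_cons]; simp [run_lift_some]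
  | succ n ih =>
    rw [enc, List.replicate_succ, List.cons_append, run_cons]
    simpa [enc] using ih

lemma enc_mem_lang (M : PDFA Bool) (n : ℕ) (v : List Bool) (hv : v ∈ M.lang) :
    enc n v ∈ (liftA M).lang := by
  obtain ⟨q, hq, hrun⟩ := hv
  exact ⟨some q, ⟨q, hq, rfl⟩, by rw [liftA_start, run_lift_enc, hrun]; rfl⟩

def dec : List Bool → ℕ × List Bool
  | [] => (0, [])
  | true :: w => ((dec w).1 + 1, (dec w).2)
  | false :: w => (0, w)

lemma dec_enc (n : ℕ) (v : List Bool) : dec (enc n v) = (n, v) := by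
  induction n with
  | zero => simp [enc, dec]
  | succ n ih => simp [enc, List.replicate_succ, dec] at *; simp [ih]

lemma mem_lang_lift (M : PDFA Bool) (w : List Bool) (hw : w ∈ (liftA M).lang) :
    w = enc (dec w).1 (dec w).2 ∧ (dec w).2 ∈ M.lang := by
  induction w with
  | nil =>
    obtain ⟨q, hq, hrun⟩ := hw
    obtain ⟨q', _, rfl⟩ := hq
    simp [PDFA.run, liftA_start] at hrun
  | cons a w ih =>
    cases a with
    | true =>
      have hw' : w ∈ (liftA M).lang := by
        obtain ⟨q, hq, hrun⟩ := hw
        rw [liftA_start, run_cons] at hrun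
        refine ⟨q, hq, ?_⟩
        simpa using hrun
      obtain ⟨h1, h2⟩ := ih hw'
      refine ⟨?_, h2⟩
      simp [dec, enc, List.replicate_succ]
      exact h1
    | false =>
      obtain ⟨q, hq, hrun⟩ := hw
      obtain ⟨q', hq', rfl⟩ := hq
      rw [liftA_start, run_cons] at hrun
      simp [run_lift_some] at hrun
      refine ⟨by simp [dec, enc], q', hq', ?_⟩
      simpa [dec] using hrun

lemma inlt_enc (n m : ℕ) (w v : List Bool) :
    inlt (enc n w) (enc m v) ↔ n < m ∨ (n = m ∧ inlt w v) := by
  induction n generalizing m with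
  | zero =>
    cases m with
    | zero => simp [enc, inlt]
    | succ m => simp [enc, List.replicate_succ, inlt]
  | succ n ih =>
    cases m with
    | zero => simp [enc, List.replicate_succ, inlt]
    | succ m =>
      simp only [enc, List.replicate_succ, List.cons_append, inlt, List.append_eq]
      rw [show (List.replicate n true ++ false :: w) = enc n w from rfl,
          show (List.replicate m true ++ false :: v) = enc m v from rfl, ih]
      simp [Nat.succ_lt_succ_iff]
      

/-- If `L` is order-isomorphic to the linguage of a DFA over `{0,1}`,
then so is `L·ω = Σ_{n ∈ ω} L`, the `ω`-indexed sum of copies of `L` (pairs `(n, a)`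
ordered by the natural number `n` first). -/
theorem isLinguage_omegaMul (L : Type) (r : L → L → Prop) (h : IsLinguageOf L r) :
    IsLinguageOf (ℕ × L) (Prod.Lex (· < ·) r) := by
  obtain ⟨M, ⟨e⟩⟩ := h
  refine ⟨liftA M, ⟨?_⟩⟩
  refine ⟨⟨fun p => ⟨enc p.1 (e p.2).1, enc_mem_lang M _ _ (e p.2).2⟩,
    fun w => ((dec w.1).1, e.symm ⟨(dec w.1).2, (mem_lang_lift M w.1 w.2).2⟩),
    ?_, ?_⟩, ?_⟩
  · rintro ⟨n, a⟩
    have h1 : dec (enc n (e a).1) = (n, (e a).1) := dec_enc n (e a).1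
    refine Prod.ext (by simp [h1]) ?_
    have h2 : (⟨(dec (enc n (e a).1)).2,
        (mem_lang_lift M _ (enc_mem_lang M n (e a).1 (e a).2)).2⟩ : M.lang) = e a :=
      Subtype.ext (by simp [h1])
    simp only [h2, e.symm_apply_apply]
  · rintro ⟨w, hw⟩
    apply Subtype.ext
    show enc _ (e (e.symm _)).1 = w
    rw [e.apply_symm_apply]
    exact ((mem_lang_lift M w hw).1).symm
  · rintro ⟨n, a⟩ ⟨m, b⟩
    show inlt (enc n (e a).1) (enc m (e b).1) ↔ _
    rw [inlt_enc, Prod.lex_def]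
    constructor
    · rintro (h | ⟨rfl, h⟩)
      · exact Or.inl h
      · exact Or.inr ⟨rfl, e.map_rel_iff.mp h⟩
    · rintro (h | ⟨h, h2⟩)
      · exact Or.inl h
      · exact Or.inr ⟨h, e.map_rel_iff.mpr h2⟩
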